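/- Let (X,f) be a dynamical system. If there exist a positive integer m and a closed f^m-invariant subset Y of X such that (Y, f^m) admits a factor map onto the full shift ({0,1}^ℕ, σ), then Y contains a point that is non-wandering for f but not recurrent for f. -/

import Mathlib

open Set Function

variable {X : Type*}

/-- A `δ`-pseudo-orbit of `f`. -/
def IsPseudoOrbit [MetricSpace X] (f : X → X) (δ : ℝ) (x : ℕ → X) : Prop :=
  ∀ n : ℕ, dist (f (x n)) (x (n + 1)) < δ

/-- `z` ε-traces the sequence `x`. -/
def Traces [MetricSpace X] (f : X → X) (ε : ℝ) (z : X) (x : ℕ → X) : Prop :=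
  ∀ n : ℕ, dist (f^[n] z) (x n) < ε

/-- The shadowing property. -/
def HasShadowing [MetricSpace X] (f : X → X) : Prop :=
  ∀ ε > (0 : ℝ), ∃ δ > (0 : ℝ), ∀ x : ℕ → X, IsPseudoOrbit f δ x → ∃ z : X, Traces f ε z x

/-- The shadowing property of the restriction of `f` to an invariant set `S`. -/
def HasShadowingOn [MetricSpace X] (f : X → X) (S : Set X) : Prop :=
  ∀ ε > (0 : ℝ), ∃ δ > (0 : ℝ), ∀ x : ℕ → X, (∀ n, x n ∈ S) → IsPseudoOrbit f δ x →
    ∃ z ∈ S, Traces f ε z x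

/-- Non-wandering point. -/
def NonWanderingPt [TopologicalSpace X] (f : X → X) (x : X) : Prop :=
  ∀ U ∈ nhds x, ∃ k : ℕ, 1 ≤ k ∧ ∃ y ∈ U, f^[k] y ∈ U

/-- The (forward) orbit of a point. -/
def orbitSet (f : X → X) (x : X) : Set X := Set.range fun n : ℕ => f^[n] x

/-- Recurrent point. -/
def RecurrentPt [TopologicalSpace X] (f : X → X) (x : X) : Prop :=
  ∀ U ∈ nhds x, ∃ k : ℕ, 1 ≤ k ∧ f^[k] x ∈ U

/-- Minimal point: every point of the orbit closure has `x` in its own orbit closure,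
i.e. the orbit closure of `x` is a minimal set. -/
def MinimalPt [TopologicalSpace X] (f : X → X) (x : X) : Prop :=
  ∀ y ∈ closure (orbitSet f x), x ∈ closure (orbitSet f y)

/-- Regularly recurrent point. -/
def RegRecPt [TopologicalSpace X] (f : X → X) (x : X) : Prop :=
  ∀ U ∈ nhds x, ∃ k : ℕ, 1 ≤ k ∧ ∀ n : ℕ, f^[k * n] x ∈ U

/-- Equicontinuity of the family of iterates of `f`. -/
def EquicontinuousMap [MetricSpace X] (f : X → X) : Prop :=
  ∀ ε > (0 : ℝ), ∃ δ > (0 : ℝ), ∀ x y : X, dist x y < δ →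
    ∀ n : ℕ, dist (f^[n] x) (f^[n] y) < ε

/-- `u` is a sensitive point of the subsystem on `S`. -/
def SensitivePtOn [MetricSpace X] (f : X → X) (S : Set X) (u : X) : Prop :=
  ∃ δ > (0 : ℝ), ∀ U ∈ nhds u, ∃ n : ℕ, ∃ a ∈ U ∩ S, ∃ b ∈ U ∩ S,
    dist (f^[n] a) (f^[n] b) > δ

/-- `u` is a sensitive point of `(X,f)`. -/
def SensitivePt [MetricSpace X] (f : X → X) (u : X) : Prop :=
  ∃ δ > (0 : ℝ), ∀ U ∈ nhds u, ∃ n : ℕ, ∃ a ∈ U, ∃ b ∈ U,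
    dist (f^[n] a) (f^[n] b) > δ

/-- Topological transitivity. -/
def TopTransitive {Y : Type*} [TopologicalSpace Y] (g : Y → Y) : Prop :=
  ∀ U V : Set Y, IsOpen U → U.Nonempty → IsOpen V → V.Nonempty →
    ∃ n : ℕ, 1 ≤ n ∧ (g^[n] '' U ∩ V).Nonempty

/-- Weak mixing: the product system is transitive. -/
def WeaklyMixing [TopologicalSpace X] (f : X → X) : Prop :=
  TopTransitive (fun p : X × X => (f p.1, f p.2))

/-- Strong mixing. -/
def StronglyMixing {Y : Type*} [TopologicalSpace Y] (g : Y → Y) : Prop :=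
  ∀ U V : Set Y, IsOpen U → U.Nonempty → IsOpen V → V.Nonempty →
    ∃ N : ℕ, ∀ n ≥ N, (g^[n] '' U ∩ V).Nonempty

/-- The shift map on the full shift over `d` symbols. -/
def shiftMap (d : ℕ) : (ℕ → Fin d) → (ℕ → Fin d) := fun x n => x (n + 1)

/-- `π` is a factor map from the subsystem `(Y, f^[m])` onto the full shift on `d` symbols. -/
def FactorOntoShift [TopologicalSpace X] (f : X → X) (m : ℕ) (Y : Set X) (d : ℕ)
    (π : X → (ℕ → Fin d)) : Prop :=
  ContinuousOn π Y ∧ π '' Y = Set.univ ∧ ∀ y ∈ Y, π (f^[m] y) = shiftMap d (π y)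


/-! ### Auxiliary lemmas -/

section AuxLemmas

variable {X : Type*}

/-- Simultaneous continuity at a point for finitely many iterates. -/
lemma cont_all_aux [MetricSpace X] {f : X → X} (hf : Continuous f) (x : X) (T : ℕ → ℕ) :
    ∀ k : ℕ, ∀ ε > (0 : ℝ), ∃ δ > (0 : ℝ), ∀ y, dist y x < δ →
      ∀ i ≤ k, dist (f^[T i] y) (f^[T i] x) < ε := by
  intro k
  induction k with
  | zero =>
    intro ε hε
    obtain ⟨δ, hδ, h⟩ := Metric.continuousAt_iff.mp ((hf.iterate (T 0)).continuousAt) ε hε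
    refine ⟨δ, hδ, fun y hy i hi => ?_⟩
    have hi0 : i = 0 := Nat.le_zero.mp hi
    subst hi0; exact h hy
  | succ k ih =>
    intro ε hε
    obtain ⟨δ₁, hδ₁, h₁⟩ := ih ε hε
    obtain ⟨δ₂, hδ₂, h₂⟩ :=
      Metric.continuousAt_iff.mp ((hf.iterate (T (k + 1))).continuousAt) ε hε
    refine ⟨min δ₁ δ₂, lt_min hδ₁ hδ₂, fun y hy i hi => ?_⟩
    rcases eq_or_lt_of_le hi with h | h
    · subst h; exact h₂ (lt_of_lt_of_le hy (min_le_right _ _))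
    · exact h₁ y (lt_of_lt_of_le hy (min_le_left _ _)) i (Nat.lt_succ_iff.mp h)

/-- Construction of an increasing sequence of times all of whose block differences
    are approximate return times. -/
lemma rec_chain_aux [MetricSpace X] {f : X → X} (hf : Continuous f) {x : X}
    (hx : ∀ ε > (0 : ℝ), ∃ n, 1 ≤ n ∧ dist (f^[n] x) x < ε) {ε : ℝ} (hε : 0 < ε) :
    ∀ k : ℕ, ∃ S : ℕ → ℕ, S 0 = 0 ∧ (∀ i, i < k → S i < S (i + 1)) ∧
      ∀ i j, i < j → j ≤ k → dist (f^[S j - S i] x) x < ε - ε / 2 ^ j := by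
  intro k
  induction k with
  | zero =>
    exact ⟨fun _ => 0, rfl, fun i hi => absurd hi (Nat.not_lt_zero i),
      fun i j hij hj => absurd (lt_of_lt_of_le hij hj) (Nat.not_lt_zero i)⟩
  | succ k ih =>
    obtain ⟨S, h0, hmono, hblk⟩ := ih
    have hm2 : ∀ i, i ≤ k → S i ≤ S k := by
      intro i hi
      induction k with
      | zero => rw [Nat.le_zero.mp hi]
      | succ k ihk =>
        rcases eq_or_lt_of_le hi with h | h
        · rw [h]
        · exact le_trans (ihk (fun j hj => hmono j (Nat.lt_succ_of_lt hj))
              (fun a b hab hb => hblk a b hab (Nat.le_succ_of_le hb))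
              (Nat.lt_succ_iff.mp h))
            (le_of_lt (hmono k (Nat.lt_succ_self k)))
    have hpow : (0 : ℝ) < ε / 2 ^ (k + 1) := by positivity
    obtain ⟨δ, hδ, hδp⟩ := cont_all_aux hf x (fun i => S k - S i) k (ε / 2 ^ (k + 1)) hpow
    obtain ⟨n, hn1, hnd⟩ := hx (min δ (ε / 2 ^ (k + 1))) (lt_min hδ hpow)
    refine ⟨fun i => if i ≤ k then S i else S k + n, ?_, ?_, ?_⟩
    · simp [Nat.zero_le k, h0]
    · intro i hi
      rcases Nat.lt_succ_iff_lt_or_eq.mp hi with h | h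
      · have hik : i ≤ k := le_of_lt h
        have hik1 : i + 1 ≤ k := h
        simpa only [if_pos hik, if_pos hik1] using hmono i h
      · subst h
        simp only [le_refl, if_pos, Nat.not_succ_le_self, if_neg, not_false_iff]
        omega
    · intro i j hij hj
      rcases Nat.lt_succ_iff_lt_or_eq.mp (Nat.lt_succ_of_le hj) with hjk | hjk
      · -- j ≤ k : use induction hypothesis
        have hjk' : j ≤ k := Nat.lt_succ_iff.mp hjk
        have hik : i ≤ k := le_trans (le_of_lt hij) hjk'
        simpa only [if_pos hik, if_pos hjk'] using hblk i j hij hjk'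
      · -- j = k + 1
        subst hjk
        have hik : i ≤ k := Nat.lt_succ_iff.mp hij
        have hSiSk : S i ≤ S k := hm2 i hik
        have hsub : (if i ≤ k then S i else S k + n) = S i := if_pos hik
        have hsub2 : (if k + 1 ≤ k then S (k+1) else S k + n) = S k + n :=
          if_neg (Nat.not_succ_le_self k)
        simp only [hsub, hsub2]
        have heq : S k + n - S i = (S k - S i) + n := by omega
        rw [heq, Function.iterate_add_apply]
        have hd1 : dist (f^[S k - S i] (f^[n] x)) (f^[S k - S i] x) < ε / 2 ^ (k + 1) :=
          hδp (f^[n] x) (lt_of_lt_of_le hnd (min_le_left _ _)) i hik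
        have hd2 : dist (f^[S k - S i] x) x ≤ ε - ε / 2 ^ k := by
          rcases eq_or_lt_of_le hik with h | h
          · rw [h, Nat.sub_self]
            simp only [Function.iterate_zero, id_eq, dist_self]
            have h2k : (1:ℝ) ≤ 2 ^ k := one_le_pow₀ (by norm_num : (1:ℝ) ≤ 2)
            have hle : ε / 2 ^ k ≤ ε := div_le_self (le_of_lt hε) h2k
            linarith
          · exact le_of_lt (hblk i k h le_rfl)
        have htri := dist_triangle (f^[S k - S i] (f^[n] x)) (f^[S k - S i] x) x
        have hhalf : ε / 2 ^ k = 2 * (ε / 2 ^ (k + 1)) := by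
          rw [pow_succ]; field_simp
        linarith

/-- A recurrent point of a continuous map is recurrent for every iterate. -/
lemma recurrentPt_iterate_aux [MetricSpace X] {f : X → X} (hf : Continuous f) {x : X} {m : ℕ}
    (hm : 1 ≤ m) (hx : RecurrentPt f x) : RecurrentPt (f^[m]) x := by
  have hx' : ∀ ε > (0 : ℝ), ∃ n, 1 ≤ n ∧ dist (f^[n] x) x < ε := by
    intro ε hε
    obtain ⟨k, hk, hmem⟩ := hx (Metric.ball x ε) (Metric.ball_mem_nhds x hε)
    exact ⟨k, hk, Metric.mem_ball.mp hmem⟩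
  intro U hU
  obtain ⟨ε, hε, hball⟩ := Metric.mem_nhds_iff.mp hU
  obtain ⟨S, h0, hmono, hblk⟩ := rec_chain_aux hf hx' hε m
  have hm3 : ∀ i j, i < j → j ≤ m → S i < S j := by
    intro i j hij hj
    clear hblk
    induction j with
    | zero => exact absurd hij (Nat.not_lt_zero i)
    | succ j ihj =>
      rcases Nat.lt_succ_iff_lt_or_eq.mp hij with h | h
      · exact lt_trans (ihj h (le_trans (Nat.le_succ j) hj)) (hmono j (Nat.lt_of_succ_le hj))
      · subst h; exact hmono i (Nat.lt_of_succ_le hj)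
  obtain ⟨a, ha, b, hb, hab, habeq⟩ :=
    Finset.exists_ne_map_eq_of_card_lt_of_maps_to
      (s := Finset.range (m + 1)) (t := Finset.range m) (f := fun i => S i % m)
      (by simp) (fun a _ => Finset.mem_range.mpr (Nat.mod_lt _ hm))
  have ham : a ≤ m := Nat.lt_succ_iff.mp (Finset.mem_range.mp ha)
  have hbm : b ≤ m := Nat.lt_succ_iff.mp (Finset.mem_range.mp hb)
  -- wlog a < b
  obtain ⟨i, j, hij, hjm, hmodeq⟩ : ∃ i j, i < j ∧ j ≤ m ∧ S i % m = S j % m := by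
    rcases lt_or_gt_of_ne hab with h | h
    · exact ⟨a, b, h, hbm, habeq⟩
    · exact ⟨b, a, h, ham, habeq.symm⟩
  have hSij : S i < S j := hm3 i j hij hjm
  have hdvd : m ∣ S j - S i := (Nat.modEq_iff_dvd' (le_of_lt hSij)).mp hmodeq
  set n := S j - S i with hn
  have hn1 : 1 ≤ n := by omega
  set K := n / m with hK
  have hK1 : 1 ≤ K := Nat.div_pos (Nat.le_of_dvd (by omega) hdvd) (by omega)
  refine ⟨K, hK1, ?_⟩
  have hiter : (f^[m])^[K] x = f^[n] x := by
    rw [← Function.iterate_mul, Nat.mul_div_cancel' hdvd]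
  rw [hiter]
  apply hball
  have hd := hblk i j hij hjm
  have : (0:ℝ) < ε / 2 ^ j := by positivity
  exact Metric.mem_ball.mpr (by linarith)

/-- A limit of a subsequence of an orbit is nonwandering. -/
lemma nw_of_subseq_aux [TopologicalSpace X] {g : X → X} {y0 z : X} {φ : ℕ → ℕ}
    (hφ : StrictMono φ) (hlim : Filter.Tendsto (fun j => g^[φ j] y0) Filter.atTop (nhds z)) :
    NonWanderingPt g z := by
  intro U hU
  have hev : ∀ᶠ j in Filter.atTop, g^[φ j] y0 ∈ U := hlim.eventually_mem hU
  obtain ⟨J, hJ⟩ := Filter.eventually_atTop.mp hev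
  have hlt : φ J < φ (J + 1) := hφ (Nat.lt_succ_self J)
  refine ⟨φ (J + 1) - φ J, by omega, g^[φ J] y0, hJ J le_rfl, ?_⟩
  rw [← Function.iterate_add_apply]
  have : φ (J + 1) - φ J + φ J = φ (J + 1) := by omega
  rw [this]
  exact hJ (J + 1) (Nat.le_succ J)

/-- Nonwandering for an iterate implies nonwandering for the map. -/
lemma nw_iterate_aux [TopologicalSpace X] {g : X → X} {z : X} {n : ℕ} (hn : 1 ≤ n)
    (h : NonWanderingPt (g^[n]) z) : NonWanderingPt g z := by
  intro U hU
  obtain ⟨k, hk, y, hy, hky⟩ := h U hU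
  refine ⟨n * k, Nat.mul_pos hn hk, y, hy, ?_⟩
  rwa [Function.iterate_mul]

end AuxLemmas

theorem shift_factor_gives_nonwandering_nonrecurrent [MetricSpace X] [CompactSpace X]
    (f : X → X) (hf : Continuous f) (m : ℕ) (hm : 1 ≤ m)
    (Y : Set X) (hYc : IsClosed Y) (hYinv : Set.MapsTo f^[m] Y Y)
    (π : X → (ℕ → Fin 2)) (hπ : FactorOntoShift f m Y 2 π) :
    ∃ x ∈ Y, NonWanderingPt f x ∧ ¬ RecurrentPt f x := by
  classical
  -- notation
  have hπc := hπ.1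
  have hπsurj := hπ.2.1
  have hπcomm := hπ.2.2
  have hYk : ∀ k : ℕ, Set.MapsTo (f^[m])^[k] Y Y := fun k => hYinv.iterate k
  -- shift iterate formula
  have hσ : ∀ (k : ℕ) (s : ℕ → Fin 2), (shiftMap 2)^[k] s = fun i => s (i + k) := by
    intro k
    induction k with
    | zero => intro s; simp
    | succ k ih =>
      intro s
      rw [Function.iterate_succ_apply, ih]
      funext i
      simp [shiftMap, Nat.add_assoc]
  -- equivariance for iterates
  have hπiter : ∀ (k : ℕ) (y : X), y ∈ Y → π ((f^[m])^[k] y) = (shiftMap 2)^[k] (π y) := by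
    intro k
    induction k with
    | zero => intro y _; simp
    | succ k ih =>
      intro y hy
      rw [Function.iterate_succ_apply, ih (f^[m] y) (hYinv hy), hπcomm y hy,
        ← Function.iterate_succ_apply]
  -- the special points of the shift
  set ω : ℕ → Fin 2 := fun i => if i = 0 then 1 else 0 with hωdef
  set p : ℕ → ℕ → Fin 2 := fun n i => if i % n = 0 then 1 else 0 with hpdef
  have hYcomp : IsCompact Y := hYc.isCompact
  -- Step 1 : for every n ≥ 1 there is a nonwandering point in the fiber of p n
  have step1 : ∀ n : ℕ, 1 ≤ n → ∃ x ∈ Y, π x = p n ∧ NonWanderingPt (f^[m]) x := by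
    intro n hn
    have : p n ∈ π '' Y := by rw [hπsurj]; exact Set.mem_univ _
    obtain ⟨y0, hy0Y, hy0π⟩ := this
    set v : ℕ → X := fun j => (f^[m])^[n * j] y0 with hvdef
    have hvY : ∀ j, v j ∈ Y := fun j => hYk (n * j) hy0Y
    obtain ⟨z, hzY, φ, hφ, hlim⟩ := hYcomp.tendsto_subseq hvY
    have hveq : ∀ j, v j = ((f^[m])^[n])^[j] y0 := by
      intro j
      simp only [hvdef]
      exact congrFun (Function.iterate_mul (f^[m]) n j) y0
    have hlim' : Filter.Tendsto (fun j => ((f^[m])^[n])^[φ j] y0) Filter.atTop (nhds z) := by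
      have : (fun j => ((f^[m])^[n])^[φ j] y0) = v ∘ φ := by
        funext j; rw [Function.comp_apply, hveq]
      rw [this]; exact hlim
    have hnwz : NonWanderingPt (f^[m]) z :=
      nw_iterate_aux hn (nw_of_subseq_aux hφ hlim')
    -- compute π z
    have hπv : ∀ j, π (v j) = p n := by
      intro j
      rw [hvdef]
      rw [hπiter (n * j) y0 hy0Y, hy0π, hσ]
      funext i
      simp only [hpdef]
      congr 1
      rw [Nat.add_mul_mod_self_left]
    have htend : Filter.Tendsto (fun j => π (v (φ j))) Filter.atTop (nhds (π z)) := by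
      have h1 : Filter.Tendsto (v ∘ φ) Filter.atTop (nhdsWithin z Y) :=
        tendsto_nhdsWithin_iff.mpr ⟨hlim, Filter.Eventually.of_forall (fun j => hvY (φ j))⟩
      exact (hπc z hzY).tendsto.comp h1
    have hπz : π z = p n := by
      have hconst : (fun j => π (v (φ j))) = fun _ => p n := funext fun j => hπv (φ j)
      rw [hconst] at htend
      exact tendsto_nhds_unique htend tendsto_const_nhds
    exact ⟨z, hzY, hπz, hnwz⟩
  -- Step 2 : choose such points and take a limit
  choose xx hxxY hxxπ hxxNW using fun n : ℕ => step1 (n + 1) (Nat.succ_le_succ (Nat.zero_le n))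
  obtain ⟨x, hxY, ψ, hψ, hxlim⟩ := hYcomp.tendsto_subseq hxxY
  -- π x = ω
  have hπx : π x = ω := by
    have htend : Filter.Tendsto (fun t => π (xx (ψ t))) Filter.atTop (nhds (π x)) := by
      have h1 : Filter.Tendsto (xx ∘ ψ) Filter.atTop (nhdsWithin x Y) :=
        tendsto_nhdsWithin_iff.mpr ⟨hxlim, Filter.Eventually.of_forall (fun t => hxxY (ψ t))⟩
      exact (hπc x hxY).tendsto.comp h1
    have htend2 : Filter.Tendsto (fun t => π (xx (ψ t))) Filter.atTop (nhds ω) := by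
      have hval : (fun t => π (xx (ψ t))) = fun t => p (ψ t + 1) :=
        funext fun t => hxxπ (ψ t)
      rw [hval, tendsto_pi_nhds]
      intro i
      have hev : ∀ᶠ t in Filter.atTop, p (ψ t + 1) i = ω i := by
        refine Filter.eventually_atTop.mpr ⟨i, fun t ht => ?_⟩
        have hti : i ≤ ψ t := le_trans ht (hψ.le_apply)
        have hmod : i % (ψ t + 1) = i := Nat.mod_eq_of_lt (by omega)
        simp only [hpdef, hωdef, hmod]
      exact Filter.Tendsto.congr' (hev.mono fun t h => h.symm) tendsto_const_nhds
    exact tendsto_nhds_unique htend htend2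
  -- nonwandering
  have hnwx : NonWanderingPt (f^[m]) x := by
    intro U hU
    obtain ⟨U', hU'sub, hU'open, hxU'⟩ := mem_nhds_iff.mp hU
    have hev : ∀ᶠ t in Filter.atTop, xx (ψ t) ∈ U' :=
      hxlim.eventually_mem (hU'open.mem_nhds hxU')
    obtain ⟨t0, ht0⟩ := Filter.eventually_atTop.mp hev
    obtain ⟨k, hk, y, hy, hky⟩ := hxxNW (ψ t0) U' (hU'open.mem_nhds (ht0 t0 le_rfl))
    exact ⟨k, hk, y, hU'sub hy, hU'sub hky⟩
  have hnwxf : NonWanderingPt f x := nw_iterate_aux hm hnwx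
  -- non-recurrence
  have hnotrec : ¬ RecurrentPt f x := by
    intro hrec
    have hrecm : RecurrentPt (f^[m]) x := recurrentPt_iterate_aux hf hm hrec
    -- the closed set where the 0-th symbol is 0
    have hCcl : IsClosed (Y ∩ π ⁻¹' {s : ℕ → Fin 2 | s 0 = 0}) := by
      apply hπc.preimage_isClosed_of_isClosed hYc
      exact IsClosed.preimage (continuous_apply 0) isClosed_singleton
    have hxnot : x ∉ Y ∩ π ⁻¹' {s : ℕ → Fin 2 | s 0 = 0} := by
      intro hmem
      have : π x 0 = 0 := hmem.2
      rw [hπx] at this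
      simp [hωdef] at this
    have hUmem : (Y ∩ π ⁻¹' {s : ℕ → Fin 2 | s 0 = 0})ᶜ ∈ nhds x :=
      hCcl.isOpen_compl.mem_nhds hxnot
    obtain ⟨k, hk, hkx⟩ := hrecm _ hUmem
    apply hkx
    constructor
    · exact hYk k hxY
    · show π ((f^[m])^[k] x) 0 = 0
      rw [hπiter k x hxY, hπx, hσ]
      simp only [hωdef, Nat.zero_add]
      exact if_neg (by omega)
  exact ⟨x, hxY, hnwxf, hnotrec⟩
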